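/- If λ ≥ (1/n)·‖D‖_op, then every trace-norm regularized estimator Ŵ with parameter λ satisfies the in-sample prediction error bound (1/n) Σ_{t=1}^T ‖X_t (Ŵ − W)_t‖₂² ≤ 2 λ ‖Ŵ − W‖_*, where (Ŵ − W)_t denotes the t-th column of Ŵ − W. -/

import Mathlib

open MeasureTheory ProbabilityTheory Matrix

/-- The (unordered) singular values of a real `m × n` matrix, indexed by `Fin n`:
the square roots of the eigenvalues of `Aᵀ * A`. -/
noncomputable def singVals {m n : ℕ} (A : Matrix (Fin m) (Fin n) ℝ) : Fin n → ℝ :=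
  fun i => Real.sqrt ((Matrix.isHermitian_conjTranspose_mul_self A).eigenvalues i)

/-- The nuclear (trace) norm: the sum of the singular values. -/
noncomputable def nucNorm {m n : ℕ} (A : Matrix (Fin m) (Fin n) ℝ) : ℝ := ∑ i, singVals A i

/-- The Frobenius norm. -/
noncomputable def frobNorm {m n : ℕ} (A : Matrix (Fin m) (Fin n) ℝ) : ℝ :=
  Real.sqrt (∑ i, ∑ j, (A i j) ^ 2)

/-- The operator norm: the largest singular value. -/
noncomputable def opNorm {m n : ℕ} (A : Matrix (Fin m) (Fin n) ℝ) : ℝ := ⨆ i, singVals A i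

/-- `Π(Δ) = (I - U Uᵀ) Δ (I - V Vᵀ)`. -/
def projPerp {d T r : ℕ} (U : Matrix (Fin d) (Fin r) ℝ) (V : Matrix (Fin T) (Fin r) ℝ)
    (Δ : Matrix (Fin d) (Fin T) ℝ) : Matrix (Fin d) (Fin T) ℝ :=
  (1 - U * Uᵀ) * Δ * (1 - V * Vᵀ)

/-- The cone `C(r) = {Δ : ‖Π(Δ)‖_* ≤ 3 ‖Δ - Π(Δ)‖_*}`. -/
noncomputable def coneC {d T r : ℕ} (U : Matrix (Fin d) (Fin r) ℝ)
    (V : Matrix (Fin T) (Fin r) ℝ) : Set (Matrix (Fin d) (Fin T) ℝ) :=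
  {Δ | nucNorm (projPerp U V Δ) ≤ 3 * nucNorm (Δ - projPerp U V Δ)}

/-- The block-diagonal quadratic form `∑ t, Δ_tᵀ S_t Δ_t`. -/
noncomputable def quadSum {d T : ℕ} (S : Fin T → Matrix (Fin d) (Fin d) ℝ)
    (Δ : Matrix (Fin d) (Fin T) ℝ) : ℝ :=
  ∑ t, (fun i => Δ i t) ⬝ᵥ (S t).mulVec (fun i => Δ i t)

/-- The restricted strong convexity condition for the block-diagonal matrix with blocks `S t`,
on the cone `cone`, with constant `κ`. -/
def RSC {d T : ℕ} (S : Fin T → Matrix (Fin d) (Fin d) ℝ)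
    (cone : Set (Matrix (Fin d) (Fin T) ℝ)) (κ : ℝ) : Prop :=
  ∀ Δ ∈ cone, 2 * κ * (frobNorm Δ) ^ 2 ≤ quadSum S Δ

/-- The cone-restricted operator norm of the block-diagonal matrix with blocks `S t`. -/
noncomputable def coneOpNorm {d T : ℕ} (S : Fin T → Matrix (Fin d) (Fin d) ℝ)
    (cone : Set (Matrix (Fin d) (Fin T) ℝ)) : ℝ :=
  sSup {c | ∃ Δ ∈ cone, frobNorm Δ = 1 ∧ c = |quadSum S Δ|}

namespace TraceReg
variable {m k : ℕ}

noncomputable def minner {a b : ℕ} (A B : Matrix (Fin a) (Fin b) ℝ) : ℝ := ∑ i, ∑ j, A i j * B i j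

noncomputable def VV (A : Matrix (Fin m) (Fin k) ℝ) : Matrix (Fin k) (Fin k) ℝ :=
  ((Matrix.isHermitian_conjTranspose_mul_self A).eigenvectorUnitary : Matrix (Fin k) (Fin k) ℝ)

noncomputable def ev (A : Matrix (Fin m) (Fin k) ℝ) : Fin k → ℝ :=
  (Matrix.isHermitian_conjTranspose_mul_self A).eigenvalues

lemma ev_nonneg (A : Matrix (Fin m) (Fin k) ℝ) (j : Fin k) : 0 ≤ ev A j :=
  Matrix.eigenvalues_conjTranspose_mul_self_nonneg A j

lemma singVals_eq (A : Matrix (Fin m) (Fin k) ℝ) (j : Fin k) :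
    singVals A j = Real.sqrt (ev A j) := rfl

lemma singVals_nonneg {A : Matrix (Fin m) (Fin k) ℝ} (i : Fin k) : 0 ≤ singVals A i :=
  Real.sqrt_nonneg _

lemma nucNorm_nonneg (A : Matrix (Fin m) (Fin k) ℝ) : 0 ≤ nucNorm A :=
  Finset.sum_nonneg fun i _ => singVals_nonneg i

lemma le_opNorm (A : Matrix (Fin m) (Fin k) ℝ) (j : Fin k) : singVals A j ≤ opNorm A := by
  have : Nonempty (Fin k) := ⟨j⟩
  exact le_ciSup (Set.Finite.bddAbove (Set.finite_range _)) j

lemma opNorm_nonneg (A : Matrix (Fin m) (Fin k) ℝ) (j : Fin k) : 0 ≤ opNorm A :=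
  le_trans (singVals_nonneg j) (le_opNorm A j)

lemma eig_congr {M N : Matrix (Fin k) (Fin k) ℝ} (hM : M.IsHermitian) (hN : N.IsHermitian)
    (h : M = N) : hM.eigenvalues = hN.eigenvalues := by subst h; rfl

lemma singVals_neg (A : Matrix (Fin m) (Fin k) ℝ) : singVals (-A) = singVals A := by
  funext i
  unfold singVals
  rw [eig_congr (Matrix.isHermitian_conjTranspose_mul_self (-A))
    (Matrix.isHermitian_conjTranspose_mul_self A) (by simp)]

lemma opNorm_neg (A : Matrix (Fin m) (Fin k) ℝ) : opNorm (-A) = opNorm A := by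
  unfold opNorm; rw [singVals_neg]

lemma VV_mul_tVV (A : Matrix (Fin m) (Fin k) ℝ) : VV A * (VV A)ᵀ = 1 :=
  (Matrix.mem_unitaryGroup_iff).mp ((Matrix.isHermitian_conjTranspose_mul_self A).eigenvectorUnitary).2

lemma tVV_mul_VV (A : Matrix (Fin m) (Fin k) ℝ) : (VV A)ᵀ * VV A = 1 :=
  (Matrix.mem_unitaryGroup_iff').mp ((Matrix.isHermitian_conjTranspose_mul_self A).eigenvectorUnitary).2

lemma gram_decomp (A : Matrix (Fin m) (Fin k) ℝ) :
    Aᵀ * A = VV A * diagonal (ev A) * (VV A)ᵀ := by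
  have h := (Matrix.isHermitian_conjTranspose_mul_self A).spectral_theorem
  simpa [VV, ev, Matrix.star_eq_conjTranspose] using h

lemma mulVec_self_dot (A : Matrix (Fin m) (Fin k) ℝ) (x y : Fin k → ℝ) :
    (A *ᵥ x) ⬝ᵥ (A *ᵥ y) = x ⬝ᵥ ((Aᵀ * A) *ᵥ y) := by
  rw [← mulVec_mulVec, dotProduct_mulVec x, Matrix.vecMul_transpose]

lemma col_orthonormal (A : Matrix (Fin m) (Fin k) ℝ) (i j : Fin k) :
    (fun p => VV A p i) ⬝ᵥ (fun p => VV A p j) = if i = j then (1:ℝ) else 0 := by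
  have := congrFun (congrFun (tVV_mul_VV A) i) j
  simpa [mul_apply, one_apply, transpose_apply, dotProduct] using this

lemma gram_col (A : Matrix (Fin m) (Fin k) ℝ) (j : Fin k) :
    (Aᵀ * A) *ᵥ (fun p => VV A p j) = fun p => ev A j * VV A p j := by
  have h : (Aᵀ * A) * VV A = VV A * diagonal (ev A) := by
    rw [gram_decomp A, Matrix.mul_assoc, Matrix.mul_assoc, tVV_mul_VV, Matrix.mul_one]
  funext p
  have h1 : ((Aᵀ * A) *ᵥ (fun q => VV A q j)) p = ((Aᵀ * A) * VV A) p j := by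
    simp [mulVec, mul_apply, dotProduct]
  rw [h1, h]
  simp [mul_apply, diagonal_apply, mul_comm]

lemma norm_A_col (A : Matrix (Fin m) (Fin k) ℝ) (j : Fin k) :
    (A *ᵥ (fun p => VV A p j)) ⬝ᵥ (A *ᵥ (fun p => VV A p j)) = ev A j := by
  rw [mulVec_self_dot, gram_col]
  have h := col_orthonormal A j j
  rw [if_pos rfl] at h
  simp only [dotProduct] at h ⊢
  calc ∑ p, VV A p j * (ev A j * VV A p j) = ev A j * ∑ p, VV A p j * VV A p j := by
        rw [Finset.mul_sum]; exact Finset.sum_congr rfl fun p _ => by ring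
    _ = ev A j := by rw [h, mul_one]

lemma quad_expand (V : Matrix (Fin k) (Fin k) ℝ) (ν : Fin k → ℝ) (x : Fin k → ℝ) :
    x ⬝ᵥ (V * diagonal ν * Vᵀ).mulVec x = ∑ j, ν j * (∑ p, V p j * x p) ^ 2 := by
  have h1 : (V * diagonal ν * Vᵀ) *ᵥ x = V *ᵥ (diagonal ν *ᵥ (Vᵀ *ᵥ x)) := by
    rw [← mulVec_mulVec, ← mulVec_mulVec]
  rw [h1, dotProduct_mulVec]
  have h2 : vecMul x V = Vᵀ *ᵥ x := by rw [Matrix.mulVec_transpose]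
  rw [h2]
  simp only [mulVec, dotProduct, diagonal_apply, transpose_apply, ite_mul, zero_mul,
    Finset.sum_ite_eq, Finset.mem_univ, if_true]
  exact Finset.sum_congr rfl fun j _ => by ring

lemma sumsq_coords {V : Matrix (Fin k) (Fin k) ℝ} (h : V * Vᵀ = 1) (x : Fin k → ℝ) :
    ∑ j, (∑ p, V p j * x p) ^ 2 = ∑ p, x p ^ 2 := by
  have h1 : ∑ j, (∑ p, V p j * x p) ^ 2 = (Vᵀ *ᵥ x) ⬝ᵥ (Vᵀ *ᵥ x) := by
    simp [dotProduct, mulVec, transpose_apply, pow_two]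
  rw [h1, dotProduct_mulVec, Matrix.vecMul_transpose, mulVec_mulVec, h, one_mulVec]
  simp [dotProduct, pow_two]

lemma eigenvalues_le_of_quad {M : Matrix (Fin k) (Fin k) ℝ} (hM : M.IsHermitian) {c : ℝ}
    (h : ∀ x : Fin k → ℝ, x ⬝ᵥ M.mulVec x ≤ c * (x ⬝ᵥ x)) (j : Fin k) :
    hM.eigenvalues j ≤ c := by
  set x : Fin k → ℝ := ⇑(hM.eigenvectorBasis j) with hx
  have hev : M *ᵥ x = hM.eigenvalues j • x := hM.mulVec_eigenvectorBasis j
  have hnorm : x ⬝ᵥ x = 1 := by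
    have h1 : ‖hM.eigenvectorBasis j‖ = 1 := hM.eigenvectorBasis.orthonormal.1 j
    have h2 : (inner ℝ (hM.eigenvectorBasis j) (hM.eigenvectorBasis j) : ℝ) = 1 := by
      rw [real_inner_self_eq_norm_sq, h1]; norm_num
    rw [← h2]
    simp only [PiLp.inner_apply, dotProduct, hx, RCLike.inner_apply, conj_trivial]
  have h4 := h x
  rw [hev] at h4
  have h3 : x ⬝ᵥ (hM.eigenvalues j • x) = hM.eigenvalues j * (x ⬝ᵥ x) := by
    simp only [dotProduct, Pi.smul_apply, smul_eq_mul, Finset.mul_sum]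
    exact Finset.sum_congr rfl fun i _ => by ring
  rw [h3, hnorm] at h4
  simpa using h4

lemma minner_eq_trace (B C : Matrix (Fin m) (Fin k) ℝ) : minner B C = trace (Bᵀ * C) := by
  simp only [minner, trace, mul_apply, transpose_apply, diag_apply]
  rw [Finset.sum_comm]

lemma minner_expand (G A : Matrix (Fin m) (Fin k) ℝ) {V : Matrix (Fin k) (Fin k) ℝ}
    (h : V * Vᵀ = 1) :
    minner G A = ∑ j, (G *ᵥ (fun p => V p j)) ⬝ᵥ (A *ᵥ (fun p => V p j)) := by
  have h1 : ∀ j, (G *ᵥ (fun p => V p j)) ⬝ᵥ (A *ᵥ (fun p => V p j))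
      = ∑ q, (G * V) q j * (A * V) q j := by
    intro j; simp [mulVec, mul_apply, dotProduct]
  calc minner G A = trace (Gᵀ * A) := minner_eq_trace G A
    _ = trace (Gᵀ * A * (V * Vᵀ)) := by rw [h, mul_one]
    _ = trace ((Gᵀ * A * V) * Vᵀ) := by rw [← Matrix.mul_assoc]
    _ = trace (Vᵀ * (Gᵀ * A * V)) := by rw [trace_mul_comm]
    _ = trace ((G * V)ᵀ * (A * V)) := by
        rw [transpose_mul, Matrix.mul_assoc, Matrix.mul_assoc]
    _ = minner (G * V) (A * V) := (minner_eq_trace _ _).symm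
    _ = ∑ j, ∑ q, (G * V) q j * (A * V) q j := by
        simp only [minner]; rw [Finset.sum_comm]
    _ = _ := by simp only [h1]

lemma mulVec_sq_le (G : Matrix (Fin m) (Fin k) ℝ) (x : Fin k → ℝ) :
    (G *ᵥ x) ⬝ᵥ (G *ᵥ x) ≤ opNorm G ^ 2 * (x ⬝ᵥ x) := by
  rcases isEmpty_or_nonempty (Fin k) with hk | hk
  · simp [mulVec, dotProduct]
  · rw [mulVec_self_dot, gram_decomp G, quad_expand]
    have hx : x ⬝ᵥ x = ∑ p, x p ^ 2 := by simp [dotProduct, pow_two]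
    rw [hx, ← sumsq_coords (VV_mul_tVV G) x, Finset.mul_sum]
    apply Finset.sum_le_sum
    intro j _
    apply mul_le_mul_of_nonneg_right _ (sq_nonneg _)
    have h1 : ev G j = singVals G j ^ 2 := by
      rw [singVals_eq, Real.sq_sqrt (ev_nonneg G j)]
    rw [h1]
    exact pow_le_pow_left₀ (singVals_nonneg j) (le_opNorm G j) 2

lemma minner_le_op_nuc (G A : Matrix (Fin m) (Fin k) ℝ) :
    minner G A ≤ opNorm G * nucNorm A := by
  rcases isEmpty_or_nonempty (Fin k) with hk | hk
  · simp [minner, nucNorm]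
  · rw [minner_expand G A (VV_mul_tVV A)]
    unfold nucNorm
    rw [Finset.mul_sum]
    apply Finset.sum_le_sum
    intro j _
    set u := G *ᵥ (fun p => VV A p j)
    set w := A *ᵥ (fun p => VV A p j)
    have hcs : u ⬝ᵥ w ≤ Real.sqrt (u ⬝ᵥ u) * Real.sqrt (w ⬝ᵥ w) := by
      have := Real.sum_mul_le_sqrt_mul_sqrt Finset.univ u w
      simpa [dotProduct, pow_two] using this
    have hw : Real.sqrt (w ⬝ᵥ w) = singVals A j := by
      rw [show w ⬝ᵥ w = ev A j from norm_A_col A j, singVals_eq]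
    have hu : Real.sqrt (u ⬝ᵥ u) ≤ opNorm G := by
      have h1 : u ⬝ᵥ u ≤ opNorm G ^ 2 * 1 := by
        have h2 := mulVec_sq_le G (fun p => VV A p j)
        have h3 := col_orthonormal A j j
        rw [if_pos rfl] at h3
        rw [h3] at h2
        exact h2
      rw [mul_one] at h1
      calc Real.sqrt (u ⬝ᵥ u) ≤ Real.sqrt (opNorm G ^ 2) := Real.sqrt_le_sqrt h1
        _ = opNorm G := Real.sqrt_sq (opNorm_nonneg G j)
    calc u ⬝ᵥ w ≤ Real.sqrt (u ⬝ᵥ u) * Real.sqrt (w ⬝ᵥ w) := hcs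
      _ ≤ opNorm G * singVals A j := by
          rw [hw]
          exact mul_le_mul_of_nonneg_right hu (singVals_nonneg j)

lemma exists_dual (A : Matrix (Fin m) (Fin k) ℝ) :
    ∃ G : Matrix (Fin m) (Fin k) ℝ, opNorm G ≤ 1 ∧ minner G A = nucNorm A := by
  rcases isEmpty_or_nonempty (Fin k) with hk | hk
  · refine ⟨0, ?_, ?_⟩
    · simp [opNorm, Real.iSup_of_isEmpty]
    · simp [minner, nucNorm]
  · set σp : Fin k → ℝ := fun j => if ev A j = 0 then 0 else (Real.sqrt (ev A j))⁻¹ with hσp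
    set G := A * VV A * diagonal σp * (VV A)ᵀ with hG
    have hGV : G * VV A = A * VV A * diagonal σp := by
      rw [hG, Matrix.mul_assoc, tVV_mul_VV, Matrix.mul_one]
    have hGv : ∀ j, (G *ᵥ fun p => VV A p j) = fun q => σp j * (A *ᵥ fun p => VV A p j) q := by
      intro j; funext q
      have h1 : (G *ᵥ fun p => VV A p j) q = (G * VV A) q j := by
        simp [mulVec, mul_apply, dotProduct]
      rw [h1, hGV]
      simp only [mul_apply, diagonal_apply, mulVec, dotProduct, mul_ite, mul_zero,
        ite_mul, zero_mul, Finset.sum_ite_eq, Finset.sum_ite_eq', Finset.mem_univ, if_true]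
      ring
    refine ⟨G, ?_, ?_⟩
    · -- opNorm G ≤ 1
      have hGG : Gᵀ * G = VV A * diagonal (fun j => σp j ^ 2 * ev A j) * (VV A)ᵀ := by
        have hGt : Gᵀ = VV A * (diagonal σp * ((VV A)ᵀ * Aᵀ)) := by
          rw [hG]
          simp only [transpose_mul, diagonal_transpose, transpose_transpose]
        rw [hGt, hG]
        calc VV A * (diagonal σp * ((VV A)ᵀ * Aᵀ)) * (A * VV A * diagonal σp * (VV A)ᵀ)
            = VV A * diagonal σp * ((VV A)ᵀ * (Aᵀ * A) * VV A) * diagonal σp * (VV A)ᵀ := by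
              simp only [Matrix.mul_assoc]
          _ = VV A * diagonal σp * diagonal (ev A) * diagonal σp * (VV A)ᵀ := by
              rw [gram_decomp A]
              rw [show (VV A)ᵀ * (VV A * diagonal (ev A) * (VV A)ᵀ) * VV A = ((VV A)ᵀ * VV A) * diagonal (ev A) * ((VV A)ᵀ * VV A) by simp only [Matrix.mul_assoc],
                tVV_mul_VV, Matrix.one_mul, Matrix.mul_one]
          _ = VV A * diagonal (fun j => σp j ^ 2 * ev A j) * (VV A)ᵀ := by
              rw [Matrix.mul_assoc (VV A), diagonal_mul_diagonal,
                Matrix.mul_assoc (VV A), diagonal_mul_diagonal]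
              congr 1
              congr 1
              ext i j'
              by_cases hij : i = j' <;> simp [diagonal_apply, hij] <;> ring
      have hquad : ∀ x : Fin k → ℝ, x ⬝ᵥ (Gᵀ * G).mulVec x ≤ 1 * (x ⬝ᵥ x) := by
        intro x
        rw [hGG, quad_expand, one_mul]
        have hx : x ⬝ᵥ x = ∑ p, x p ^ 2 := by simp [dotProduct, pow_two]
        rw [hx, ← sumsq_coords (VV_mul_tVV A) x]
        apply Finset.sum_le_sum
        intro j _
        have hcoef : σp j ^ 2 * ev A j ≤ 1 := by
          rw [hσp]
          by_cases h : ev A j = 0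
          · simp [h]
          · simp only [if_neg h]
            rw [inv_pow, Real.sq_sqrt (ev_nonneg A j), inv_mul_cancel₀ h]
        nlinarith [sq_nonneg (∑ p, VV A p j * x p), hcoef]
      unfold opNorm
      apply ciSup_le
      intro j
      rw [singVals_eq]
      have h5 : ev G j ≤ 1 := eigenvalues_le_of_quad (Matrix.isHermitian_conjTranspose_mul_self G) hquad j
      calc Real.sqrt (ev G j) ≤ Real.sqrt 1 := Real.sqrt_le_sqrt h5
        _ = 1 := Real.sqrt_one
    · -- minner G A = nucNorm A
      rw [minner_expand G A (VV_mul_tVV A)]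
      unfold nucNorm
      apply Finset.sum_congr rfl
      intro j _
      rw [hGv j]
      have h6 : (fun q => σp j * (A *ᵥ fun p => VV A p j) q) ⬝ᵥ (A *ᵥ fun p => VV A p j)
          = σp j * ((A *ᵥ fun p => VV A p j) ⬝ᵥ (A *ᵥ fun p => VV A p j)) := by
        simp only [dotProduct, Finset.mul_sum]
        exact Finset.sum_congr rfl fun q _ => by ring
      rw [h6, norm_A_col A j, singVals_eq, hσp]
      by_cases h : ev A j = 0
      · simp [h]
      · simp only [if_neg h]
        have hpos : 0 < ev A j := lt_of_le_of_ne (ev_nonneg A j) (Ne.symm h)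
        have hs : Real.sqrt (ev A j) ≠ 0 := ne_of_gt (Real.sqrt_pos.2 hpos)
        field_simp
        rw [Real.sq_sqrt (ev_nonneg A j)]

lemma minner_sub_smul (G W₁ Δ : Matrix (Fin m) (Fin k) ℝ) (c : ℝ) :
    minner G (W₁ - c • Δ) = minner G W₁ - c * minner G Δ := by
  have h : ∀ i j, G i j * (W₁ - c • Δ) i j = G i j * W₁ i j - c * (G i j * Δ i j) := by
    intro i j
    simp only [Matrix.sub_apply, Matrix.smul_apply, smul_eq_mul]
    ring
  simp only [minner, h, Finset.sum_sub_distrib, Finset.mul_sum]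

lemma minner_neg_left (G Δ : Matrix (Fin m) (Fin k) ℝ) : minner (-G) Δ = - minner G Δ := by
  simp [minner, Finset.sum_neg_distrib]

end TraceReg

open TraceReg

/-- in-sample prediction error bound for the trace-norm regularized estimator
when `λ ≥ (1/n) ‖D‖_op`. -/
theorem stmt1 {d T n : ℕ} (hd : 0 < d) (hT : 0 < T) (hn : 0 < n)
    (W : Matrix (Fin d) (Fin T) ℝ)
    (X : Fin T → Matrix (Fin n) (Fin d) ℝ) (η : Fin T → Fin n → ℝ) (y : Fin T → Fin n → ℝ)
    (hy : ∀ t, y t = (X t).mulVec (fun i => W i t) + η t)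
    (lam : ℝ) (hlam₀ : 0 < lam)
    -- `λ ≥ (1/n) ‖D‖_op`, where `D = ∑ t, Xᵀ_t η_t e_tᵀ`
    (hlam : (1 / (n : ℝ)) * opNorm (Matrix.of fun a t => ∑ i, X t i a * η t i) ≤ lam)
    (What : Matrix (Fin d) (Fin T) ℝ)
    -- `Ŵ` is a minimizer of the trace-norm regularized least squares objective
    (hmin : ∀ A : Matrix (Fin d) (Fin T) ℝ,
      (n : ℝ)⁻¹ * (∑ t, ∑ i, (y t i - ((X t).mulVec fun a => What a t) i) ^ 2)
          + lam * nucNorm What ≤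
        (n : ℝ)⁻¹ * (∑ t, ∑ i, (y t i - ((X t).mulVec fun a => A a t) i) ^ 2)
          + lam * nucNorm A) :
    (n : ℝ)⁻¹ * (∑ t, ∑ i, (((X t).mulVec fun a => (What - W) a t) i) ^ 2)
      ≤ 2 * lam * nucNorm (What - W) := by
  classical
  have hnpos : (0:ℝ) < n := by exact_mod_cast hn
  set Δ : Matrix (Fin d) (Fin T) ℝ := What - W with hΔ
  set D : Matrix (Fin d) (Fin T) ℝ := Matrix.of fun a t => ∑ i, X t i a * η t i with hD
  set q : Fin T → Fin n → ℝ := fun t => (X t).mulVec (fun a => Δ a t) with hqdef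
  set A₀ : Matrix (Fin d) (Fin T) ℝ := What - (2:ℝ)⁻¹ • Δ with hA₀
  have hq1 : ∀ t i, y t i - ((X t).mulVec fun a => What a t) i = η t i - q t i := by
    intro t i
    rw [hy t]
    have e : ∀ a, X t i a * What a t = X t i a * W a t + X t i a * Δ a t := by
      intro a; rw [hΔ]; simp only [Matrix.sub_apply]; ring
    simp only [Pi.add_apply, mulVec, dotProduct, hqdef]
    rw [Finset.sum_congr rfl (fun a _ => e a), Finset.sum_add_distrib]
    ring
  have hq2 : ∀ t i, y t i - ((X t).mulVec fun a => A₀ a t) i = η t i - 2⁻¹ * q t i := by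
    intro t i
    rw [hy t]
    have e : ∀ a, X t i a * A₀ a t = X t i a * W a t + 2⁻¹ * (X t i a * Δ a t) := by
      intro a; rw [hA₀, hΔ]
      simp only [Matrix.sub_apply, Matrix.smul_apply, smul_eq_mul]; ring
    simp only [Pi.add_apply, mulVec, dotProduct, hqdef]
    rw [Finset.sum_congr rfl (fun a _ => e a), Finset.sum_add_distrib, ← Finset.mul_sum]
    ring
  have hbasic := hmin A₀
  have s1eq : (∑ t, ∑ i, (y t i - ((X t).mulVec fun a => What a t) i)^2)
      = ∑ t, ∑ i, (η t i - q t i)^2 :=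
    Finset.sum_congr rfl fun t _ => Finset.sum_congr rfl fun i _ => by rw [hq1]
  have s2eq : (∑ t, ∑ i, (y t i - ((X t).mulVec fun a => A₀ a t) i)^2)
      = ∑ t, ∑ i, (η t i - 2⁻¹ * q t i)^2 :=
    Finset.sum_congr rfl fun t _ => Finset.sum_congr rfl fun i _ => by rw [hq2]
  rw [s1eq, s2eq] at hbasic
  set Q := ∑ t, ∑ i, (q t i)^2 with hQ
  set E := ∑ t, ∑ i, η t i * q t i with hE
  have hsplit : ∑ t, ∑ i, (η t i - q t i)^2
      = (∑ t, ∑ i, (η t i - 2⁻¹ * q t i)^2) + ((3/4) * Q - E) := by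
    have e : ∀ (t : Fin T) (i : Fin n), (η t i - q t i)^2
        = (η t i - 2⁻¹ * q t i)^2 + ((3/4)*(q t i)^2 - η t i * q t i) := by intros; ring
    calc ∑ t, ∑ i, (η t i - q t i)^2
        = ∑ t, ∑ i, ((η t i - 2⁻¹ * q t i)^2 + ((3/4)*(q t i)^2 - η t i * q t i)) :=
          Finset.sum_congr rfl fun t _ => Finset.sum_congr rfl fun i _ => e t i
      _ = _ := by
          simp only [Finset.sum_add_distrib, Finset.sum_sub_distrib, ← Finset.mul_sum, hQ, hE]
  rw [hsplit, mul_add] at hbasic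
  have hstep : (n:ℝ)⁻¹ * ((3/4) * Q - E) ≤ lam * (nucNorm A₀ - nucNorm What) := by
    rw [mul_sub]; linarith
  have hnuc : nucNorm A₀ ≤ nucNorm What + 2⁻¹ * nucNorm Δ := by
    obtain ⟨G, hG1, hG2⟩ := exists_dual A₀
    have h1 : minner G A₀ = minner G What - 2⁻¹ * minner G Δ := by
      rw [hA₀]; exact minner_sub_smul G What Δ 2⁻¹
    have h2 : minner G What ≤ nucNorm What := by
      refine le_trans (minner_le_op_nuc G What) ?_
      calc opNorm G * nucNorm What ≤ 1 * nucNorm What :=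
            mul_le_mul_of_nonneg_right hG1 (nucNorm_nonneg What)
        _ = nucNorm What := one_mul _
    have h3 : - minner G Δ ≤ nucNorm Δ := by
      rw [← minner_neg_left]
      refine le_trans (minner_le_op_nuc (-G) Δ) ?_
      rw [opNorm_neg]
      calc opNorm G * nucNorm Δ ≤ 1 * nucNorm Δ :=
            mul_le_mul_of_nonneg_right hG1 (nucNorm_nonneg Δ)
        _ = nucNorm Δ := one_mul _
    have h4 := mul_le_mul_of_nonneg_left h3 (by norm_num : (0:ℝ) ≤ 2⁻¹)
    linarith [hG2, h1]
  have hEeq : E = minner D Δ := by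
    calc E = ∑ t, ∑ i, ∑ a, η t i * (X t i a * Δ a t) := by
          simp only [hE, hqdef, mulVec, dotProduct, Finset.mul_sum]
      _ = ∑ t, ∑ a, ∑ i, η t i * (X t i a * Δ a t) :=
          Finset.sum_congr rfl fun t _ => Finset.sum_comm
      _ = ∑ a, ∑ t, ∑ i, η t i * (X t i a * Δ a t) := Finset.sum_comm
      _ = minner D Δ := by
          simp only [minner, hD, Matrix.of_apply, Finset.sum_mul]
          exact Finset.sum_congr rfl fun a _ => Finset.sum_congr rfl fun t _ =>
            Finset.sum_congr rfl fun i _ => by ring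
  have hopD : opNorm D ≤ n * lam := by
    have h := mul_le_mul_of_nonneg_left hlam hnpos.le
    rw [← mul_assoc, mul_one_div, div_self (ne_of_gt hnpos), one_mul] at h
    exact h
  have h7 : (n:ℝ)⁻¹ * E ≤ lam * nucNorm Δ := by
    have h5 : E ≤ (n * lam) * nucNorm Δ := by
      rw [hEeq]
      refine le_trans (minner_le_op_nuc D Δ) ?_
      exact mul_le_mul_of_nonneg_right hopD (nucNorm_nonneg Δ)
    calc (n:ℝ)⁻¹ * E ≤ (n:ℝ)⁻¹ * ((n * lam) * nucNorm Δ) :=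
          mul_le_mul_of_nonneg_left h5 (inv_nonneg.2 hnpos.le)
      _ = lam * nucNorm Δ := by field_simp
  have hQE : (n:ℝ)⁻¹ * ((3/4) * Q - E) ≤ lam * (2⁻¹ * nucNorm Δ) := by
    refine le_trans hstep ?_
    have : nucNorm A₀ - nucNorm What ≤ 2⁻¹ * nucNorm Δ := by linarith
    exact mul_le_mul_of_nonneg_left this hlam₀.le
  rw [mul_sub] at hQE
  have h9 : (n:ℝ)⁻¹ * ((3/4)*Q) = (3/4) * ((n:ℝ)⁻¹ * Q) := by ring
  linarith [h7, hQE, h9]
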